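/- Let U ⊆ ℂ be open, let f: U → ℂ be twice continuously (real-)differentiable, let θ: U → ℝ be continuously (real-)differentiable, and set ν = e^{iθ}. Suppose z ∈ U satisfies Dθ(z)[ν(z)] = 0 (vanishing normal derivative of θ at z), and let κ(z) = Dθ(z)[iν(z)]. Then 4·∂(∂̄f)(z) = ∂_n(∂_n f)(z) + ∂_s(∂_s f)(z) + κ(z)·∂_n f(z); that is, the normalized Laplacian Δ = ∂∂̄ satisfies 4Δ = ∂_s² + ∂_n² + κ·∂_n at z. -/

import Mathlib

open Complex

/-- The Wirtinger derivative `∂g(z) = (1/2)(Dg(z)[1] − i·Dg(z)[i])`. -/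
noncomputable def wirtingerD (g : ℂ → ℂ) (z : ℂ) : ℂ :=
  (fderiv ℝ g z 1 - Complex.I * fderiv ℝ g z Complex.I) / 2

/-- The conjugate Wirtinger derivative `∂̄g(z) = (1/2)(Dg(z)[1] + i·Dg(z)[i])`. -/
noncomputable def wirtingerDBar (g : ℂ → ℂ) (z : ℂ) : ℂ :=
  (fderiv ℝ g z 1 + Complex.I * fderiv ℝ g z Complex.I) / 2

/-- The "normal" derivative `∂_n g = ν·∂g + ν̄·∂̄g` with respect to a unimodular field `ν`. -/
noncomputable def dN (ν : ℂ → ℂ) (g : ℂ → ℂ) (z : ℂ) : ℂ :=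
  ν z * wirtingerD g z + (starRingEnd ℂ) (ν z) * wirtingerDBar g z

/-- The "tangential" derivative `∂_s g = iν·∂g − iν̄·∂̄g` with respect to a unimodular field `ν`. -/
noncomputable def dS (ν : ℂ → ℂ) (g : ℂ → ℂ) (z : ℂ) : ℂ :=
  Complex.I * ν z * wirtingerD g z - Complex.I * (starRingEnd ℂ) (ν z) * wirtingerDBar g z

/-- With `ν = e^{iθ}` and `∂_n θ(z) = 0`, the normalized Laplacian `Δ = ∂∂̄` satisfies
`4Δf = ∂_s² f + ∂_n² f + κ·∂_n f` at `z`, where `κ(z) = ∂_s θ(z)`. -/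
theorem laplacian_curvilinear (U : Set ℂ) (hU : IsOpen U) (f : ℂ → ℂ) (θ : ℂ → ℝ)
    (hf : ContDiffOn ℝ 2 f U) (hθ : ContDiffOn ℝ 1 θ U) (ν : ℂ → ℂ)
    (hνdef : ∀ w, ν w = Complex.exp (Complex.I * (θ w : ℂ)))
    (z : ℂ) (hz : z ∈ U)
    (hn : fderiv ℝ θ z (ν z) = 0) :
    4 * wirtingerD (wirtingerDBar f) z
      = dN ν (dN ν f) z + dS ν (dS ν f) z
        + ((fderiv ℝ θ z (Complex.I * ν z) : ℝ) : ℂ) * dN ν f z := by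
  have hE : ν = fun w => Complex.exp (Complex.I * (θ w : ℂ)) := funext hνdef
  subst hE
  beta_reduce at hn ⊢
  have hzU : U ∈ nhds z := hU.mem_nhds hz
  have hfz : ContDiffAt ℝ 2 f z := hf.contDiffAt hzU
  have hθz : ContDiffAt ℝ 1 θ z := hθ.contDiffAt hzU
  have hθd : HasFDerivAt θ (fderiv ℝ θ z) z :=
    ((hθz.differentiableAt one_ne_zero).hasFDerivAt)
  have hFd : HasFDerivAt (fderiv ℝ f) (fderiv ℝ (fderiv ℝ f) z) z := by
    have h2 : ContDiffAt ℝ 1 (fderiv ℝ f) z := hfz.fderiv_right (by norm_num)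
    exact (h2.differentiableAt one_ne_zero).hasFDerivAt
  have hsym : fderiv ℝ (fderiv ℝ f) z 1 Complex.I = fderiv ℝ (fderiv ℝ f) z Complex.I 1 :=
    hfz.isSymmSndFDerivAt (by simp [minSmoothness_of_isRCLikeNormedField]) 1 Complex.I
  have hFv : ∀ v : ℂ, HasFDerivAt (fun w => fderiv ℝ f w v)
      ((ContinuousLinearMap.apply ℝ ℂ v).comp (fderiv ℝ (fderiv ℝ f) z)) z :=
    fun v => (ContinuousLinearMap.apply ℝ ℂ v).hasFDerivAt.comp z hFd
  have hwD : HasFDerivAt (wirtingerD f) _ z :=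
    ((hFv 1).sub ((hFv Complex.I).const_mul Complex.I)).mul_const ((2:ℂ)⁻¹)
  have hwDb : HasFDerivAt (wirtingerDBar f) _ z :=
    ((hFv 1).add ((hFv Complex.I).const_mul Complex.I)).mul_const ((2:ℂ)⁻¹)
  have hθC : HasFDerivAt (fun w => ((θ w : ℝ) : ℂ)) (Complex.ofRealCLM.comp (fderiv ℝ θ z)) z :=
    Complex.ofRealCLM.hasFDerivAt.comp z hθd
  have hν : HasFDerivAt (fun w => Complex.exp (Complex.I * (θ w : ℂ))) _ z :=
    (hθC.const_mul Complex.I).cexp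
  have hνc : HasFDerivAt (fun w => (starRingEnd ℂ) (Complex.exp (Complex.I * (θ w : ℂ)))) _ z :=
    Complex.conjCLE.toContinuousLinearMap.hasFDerivAt.comp z hν
  have hdN : HasFDerivAt (dN (fun w => Complex.exp (Complex.I * (θ w : ℂ))) f) _ z :=
    (hν.mul hwD).add (hνc.mul hwDb)
  have hdS : HasFDerivAt (dS (fun w => Complex.exp (Complex.I * (θ w : ℂ))) f) _ z :=
    ((hν.const_mul Complex.I).mul hwD).sub ((hνc.const_mul Complex.I).mul hwDb)
  have e1 : fderiv ℝ (wirtingerDBar f) z = _ := hwDb.fderiv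
  have e2 : fderiv ℝ (dN (fun w => Complex.exp (Complex.I * (θ w : ℂ))) f) z = _ := hdN.fderiv
  have e3 : fderiv ℝ (dS (fun w => Complex.exp (Complex.I * (θ w : ℂ))) f) z = _ := hdS.fderiv
  simp only [dN, dS, wirtingerD, wirtingerDBar]
  rw [e1, e2, e3]
  simp only [ContinuousLinearMap.add_apply, ContinuousLinearMap.sub_apply,
    ContinuousLinearMap.smul_apply, ContinuousLinearMap.coe_comp', Function.comp_apply,
    ContinuousLinearMap.apply_apply, Complex.ofRealCLM_apply, smul_eq_mul,
    ContinuousLinearEquiv.coe_coe, Complex.conjCLE_apply, ContinuousLinearMap.coe_smul',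
    Pi.smul_apply, map_add, map_sub, map_mul, map_smul]
  simp only [wirtingerD, wirtingerDBar, Complex.conj_I, Complex.conj_ofReal]
  obtain ⟨x, y, hExy⟩ : ∃ x y : ℝ,
      Complex.exp (Complex.I * (θ z : ℂ)) = (x : ℂ) + (y : ℂ) * Complex.I :=
    ⟨_, _, (Complex.re_add_im _).symm⟩
  have hL : ∀ w : ℂ, fderiv ℝ θ z w
      = w.re * fderiv ℝ θ z 1 + w.im * fderiv ℝ θ z Complex.I := by
    intro w
    have hw : w = w.re • (1:ℂ) + w.im • Complex.I := by
      simp [Complex.real_smul, Complex.re_add_im]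
    conv_lhs => rw [hw]
    rw [map_add, map_smul, map_smul, smul_eq_mul, smul_eq_mul]
  have hconj : (starRingEnd ℂ) (Complex.exp (Complex.I * (θ z : ℂ)))
      = (x : ℂ) - (y : ℂ) * Complex.I := by
    rw [hExy]
    simp [Complex.conj_I]
    ring
  have hab : ((x : ℂ) + (y : ℂ) * Complex.I) * ((x : ℂ) - (y : ℂ) * Complex.I) = 1 := by
    rw [← hExy, ← hconj, ← Complex.exp_conj, ← Complex.exp_add, map_mul, Complex.conj_I,
      Complex.conj_ofReal]
    ring_nf
    exact Complex.exp_zero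
  have hnR : x * fderiv ℝ θ z 1 + y * fderiv ℝ θ z Complex.I = 0 := by
    have h := hn
    rw [hExy, hL] at h
    simpa using h
  have hnC : (x : ℂ) * ((fderiv ℝ θ z 1 : ℝ) : ℂ) + (y : ℂ) * ((fderiv ℝ θ z Complex.I : ℝ) : ℂ) = 0 := by
    exact_mod_cast congrArg (fun t : ℝ => (t : ℂ)) hnR
  have hκ : fderiv ℝ θ z (Complex.I * Complex.exp (Complex.I * (θ z : ℂ)))
      = -y * fderiv ℝ θ z 1 + x * fderiv ℝ θ z Complex.I := by
    rw [hExy, hL]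
    simp
  rw [hκ]
  push_cast
  rw [hconj, hExy]
  have hI2 : Complex.I ^ 2 = -1 := Complex.I_sq
  linear_combination Complex.I * hsym
    + ((y : ℂ) * fderiv ℝ f z 1 - (x : ℂ) * fderiv ℝ f z Complex.I) * hnC
    - (fderiv ℝ (fderiv ℝ f) z 1 1 + fderiv ℝ (fderiv ℝ f) z Complex.I Complex.I) * hab
    + (-(fderiv ℝ (fderiv ℝ f) z Complex.I Complex.I)
       + (y:ℂ)^2 * fderiv ℝ (fderiv ℝ f) z Complex.I Complex.I
       + (y:ℂ)^2 * fderiv ℝ (fderiv ℝ f) z 1 1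
       - (y:ℂ)^2 * ((fderiv ℝ θ z Complex.I : ℝ):ℂ) * fderiv ℝ f z 1
       + (x:ℂ) * (y:ℂ) * ((fderiv ℝ θ z Complex.I : ℝ):ℂ) * fderiv ℝ f z Complex.I
       + (x:ℂ)^2 * fderiv ℝ (fderiv ℝ f) z Complex.I Complex.I
       - (x:ℂ)^2 * ((fderiv ℝ θ z Complex.I : ℝ):ℂ) * fderiv ℝ f z 1
       + (x:ℂ)^2 * ((fderiv ℝ θ z 1 : ℝ):ℂ) * fderiv ℝ f z Complex.I
       + Complex.I^2 * (-(y:ℂ)^2 * fderiv ℝ (fderiv ℝ f) z Complex.I Complex.I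
           - (y:ℂ)^2 * fderiv ℝ (fderiv ℝ f) z 1 1
           + (y:ℂ)^2 * ((fderiv ℝ θ z Complex.I : ℝ):ℂ) * fderiv ℝ f z 1
           - (y:ℂ)^2 * ((fderiv ℝ θ z 1 : ℝ):ℂ) * fderiv ℝ f z Complex.I
           + (x:ℂ) * (y:ℂ) * fderiv ℝ (fderiv ℝ f) z Complex.I 1
           + (x:ℂ) * (y:ℂ) * fderiv ℝ (fderiv ℝ f) z 1 Complex.I
           - (x:ℂ)^2 * fderiv ℝ (fderiv ℝ f) z Complex.I Complex.I)) * hI2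
    + (-(y:ℂ)^2 * fderiv ℝ (fderiv ℝ f) z 1 1
       - (y:ℂ)^2 * fderiv ℝ (fderiv ℝ f) z Complex.I Complex.I
       - Complex.I^2 * (x:ℂ) * (y:ℂ) * fderiv ℝ f z 1 * ((fderiv ℝ θ z 1 : ℝ):ℂ)
       + Complex.I^2 * (x:ℂ)^2 * fderiv ℝ f z 1 * ((fderiv ℝ θ z Complex.I : ℝ):ℂ)
       - Complex.I^4 * (x:ℂ) * (y:ℂ) * fderiv ℝ f z Complex.I * ((fderiv ℝ θ z Complex.I : ℝ):ℂ)
       + Complex.I^4 * (y:ℂ)^2 * fderiv ℝ f z Complex.I * ((fderiv ℝ θ z 1 : ℝ):ℂ)) * hI2
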